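/- Let α > −1 be a real number. For all m, n ∈ ℕ, the generalized Laguerre polynomials satisfy the orthogonality relation ∫_0^∞ L_n^α(x) L_m^α(x) x^α e^{−x} dx = 0 if m ≠ n, and ∫_0^∞ (L_n^α(x))^2 x^α e^{−x} dx = Γ(α+n+1)/n!, which is nonzero. -/

import Mathlib

open Polynomial Finset MeasureTheory Real

/-- The generalized Laguerre polynomial
`L_n^α(x) = Σ_{k=0}^n (−1)^k ((α+k+1)_{n−k} / ((n−k)!·k!)) x^k`. -/
noncomputable def laguerre (α : ℝ) (n : ℕ) : Polynomial ℝ :=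
  ∑ k ∈ Finset.range (n + 1),
    Polynomial.C ((-1 : ℝ) ^ k * (ascPochhammer ℝ (n - k)).eval (α + k + 1) /
      ((n - k).factorial * k.factorial)) * Polynomial.X ^ k

/-- coefficient of `laguerre α n` -/
noncomputable def lagC (α : ℝ) (n k : ℕ) : ℝ :=
  (-1 : ℝ) ^ k * (ascPochhammer ℝ (n - k)).eval (α + k + 1) /
      ((n - k).factorial * k.factorial)

lemma laguerre_eval (α : ℝ) (n : ℕ) (x : ℝ) :
    (laguerre α n).eval x = ∑ k ∈ Finset.range (n + 1), lagC α n k * x ^ k := by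
  simp [laguerre, lagC, Polynomial.eval_finset_sum]

/-- alternating finite-difference sum -/
noncomputable def Tsum (n j : ℕ) (β : ℝ) : ℝ :=
  ∑ k ∈ Finset.range (n + 1),
    (-1 : ℝ) ^ k * (n.choose k) * (ascPochhammer ℝ j).eval (β + k)

lemma alt_sum_succ (f : ℕ → ℝ) (n : ℕ) :
    ∑ k ∈ Finset.range (n + 2), (-1 : ℝ) ^ k * ((n + 1).choose k) * f k
      = ∑ k ∈ Finset.range (n + 1), (-1 : ℝ) ^ k * (n.choose k) * (f k - f (k + 1)) := by
  have h1 : ∑ k ∈ Finset.range (n + 1), (-1 : ℝ) ^ k * (n.choose (k + 1)) * f (k + 1)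
      = ∑ k ∈ Finset.range n, (-1 : ℝ) ^ k * (n.choose (k + 1)) * f (k + 1) := by
    rw [Finset.sum_range_succ]
    simp [Nat.choose_succ_self]
  have h2 : ∑ k ∈ Finset.range (n + 1), (-1 : ℝ) ^ k * (n.choose k) * f k
      = (∑ k ∈ Finset.range n, (-1 : ℝ) ^ (k + 1) * (n.choose (k + 1)) * f (k + 1)) + f 0 := by
    rw [Finset.sum_range_succ' (fun k => (-1 : ℝ) ^ k * (n.choose k) * f k) n]
    simp
  rw [Finset.sum_range_succ' (fun k => (-1 : ℝ) ^ k * ((n + 1).choose k) * f k) (n + 1)]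
  simp only [Nat.choose_succ_succ, Nat.cast_add, pow_succ, Nat.choose_zero_right, pow_zero]
  have expand : ∀ k : ℕ, (-1 : ℝ) ^ k * (-1) * (↑(n.choose k) + ↑(n.choose (k + 1))) * f (k + 1)
      = -((-1 : ℝ) ^ k * (n.choose k) * f (k + 1)) - (-1 : ℝ) ^ k * (n.choose (k + 1)) * f (k + 1) := by
    intro k; ring
  simp only [expand]
  rw [Finset.sum_sub_distrib, Finset.sum_neg_distrib, h1]
  have h3 : ∑ k ∈ Finset.range (n + 1), (-1 : ℝ) ^ k * (n.choose k) * (f k - f (k + 1))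
      = (∑ k ∈ Finset.range (n + 1), (-1 : ℝ) ^ k * (n.choose k) * f k)
        - ∑ k ∈ Finset.range (n + 1), (-1 : ℝ) ^ k * (n.choose k) * f (k + 1) := by
    rw [← Finset.sum_sub_distrib]; apply Finset.sum_congr rfl; intro k _; ring
  rw [h3, h2]
  have h4 : ∑ k ∈ Finset.range n, (-1 : ℝ) ^ (k + 1) * (n.choose (k + 1)) * f (k + 1)
      = -∑ k ∈ Finset.range n, (-1 : ℝ) ^ k * (n.choose (k + 1)) * f (k + 1) := by
    rw [← Finset.sum_neg_distrib]; apply Finset.sum_congr rfl; intro k _; ring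
  rw [h4]; ring

lemma ascPochhammer_succ_eval_left (j : ℕ) (x : ℝ) :
    (ascPochhammer ℝ (j + 1)).eval x = x * (ascPochhammer ℝ j).eval (x + 1) := by
  rw [ascPochhammer_succ_left]
  simp [eval_comp]

lemma Tsum_succ_succ (n j : ℕ) (β : ℝ) :
    Tsum (n + 1) (j + 1) β = -((j : ℝ) + 1) * Tsum n j (β + 1) := by
  unfold Tsum
  rw [show n + 1 + 1 = n + 2 from rfl,
    alt_sum_succ (fun k => (ascPochhammer ℝ (j + 1)).eval (β + k)) n, Finset.mul_sum]
  apply Finset.sum_congr rfl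
  intro k _
  have e1 : (ascPochhammer ℝ (j + 1)).eval (β + k) = (β + k) * (ascPochhammer ℝ j).eval (β + k + 1) :=
    ascPochhammer_succ_eval_left j _
  have e2 : (ascPochhammer ℝ (j + 1)).eval (β + (k + 1 : ℕ))
      = (ascPochhammer ℝ j).eval (β + k + 1) * (β + k + 1 + j) := by
    push_cast
    rw [show β + ((k : ℝ) + 1) = β + k + 1 by ring, ascPochhammer_succ_eval]
  have e3 : β + 1 + (k : ℝ) = β + k + 1 := by ring
  rw [e1, e2, e3]
  ring

lemma Tsum_zero_of_ne (n : ℕ) (hn : n ≠ 0) (β : ℝ) : Tsum n 0 β = 0 := by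
  have h := Int.alternating_sum_range_choose_of_ne hn
  have h' : ((∑ i ∈ Finset.range (n + 1), (-1 : ℤ) ^ i * ↑(n.choose i) : ℤ) : ℝ) = 0 := by
    rw [h]; simp
  push_cast at h'
  unfold Tsum
  simpa [ascPochhammer_zero] using h'

lemma Tsum_lt (j : ℕ) : ∀ n : ℕ, ∀ β : ℝ, j < n → Tsum n j β = 0 := by
  induction j with
  | zero =>
    intro n β hn
    exact Tsum_zero_of_ne n (by omega) β
  | succ j ih =>
    intro n β hn
    obtain ⟨n', rfl⟩ : ∃ n', n = n' + 1 := ⟨n - 1, by omega⟩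
    rw [Tsum_succ_succ, ih n' (β + 1) (by omega)]
    ring

lemma Tsum_diag (n : ℕ) : ∀ β : ℝ, Tsum n n β = (-1 : ℝ) ^ n * n.factorial := by
  induction n with
  | zero => intro β; unfold Tsum; simp
  | succ n ih =>
    intro β
    rw [Tsum_succ_succ, ih (β + 1), Nat.factorial_succ]
    push_cast
    ring

lemma Gamma_mul_poch {x : ℝ} (hx : 0 < x) (m : ℕ) :
    Real.Gamma x * (ascPochhammer ℝ m).eval x = Real.Gamma (x + m) := by
  induction m with
  | zero => simp
  | succ m ih =>
    have hxm : x + (m : ℝ) ≠ 0 := by positivity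
    rw [ascPochhammer_succ_eval, show x + ((m : ℕ) + 1 : ℕ) = (x + m) + 1 by push_cast; ring,
      Real.Gamma_add_one hxm, ← ih]
    ring

section Analysis

variable {α : ℝ}

lemma mono_integrable (hα : -1 < α) (j : ℕ) :
    IntegrableOn (fun x : ℝ => x ^ j * x ^ α * Real.exp (-x)) (Set.Ioi 0) := by
  have hs : (0 : ℝ) < α + j + 1 := by
    have : (0 : ℝ) ≤ j := Nat.cast_nonneg j
    linarith
  refine (Real.GammaIntegral_convergent hs).congr_fun ?_ measurableSet_Ioi
  intro x hx
  have hx' : (0 : ℝ) < x := hx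
  dsimp only
  rw [show α + (j : ℝ) + 1 - 1 = (j : ℝ) + α by ring, Real.rpow_add hx', Real.rpow_natCast]
  ring

lemma mono_integral (hα : -1 < α) (j : ℕ) :
    ∫ x in Set.Ioi (0 : ℝ), x ^ j * x ^ α * Real.exp (-x) = Real.Gamma (α + j + 1) := by
  have hs : (0 : ℝ) < α + j + 1 := by
    have : (0 : ℝ) ≤ j := Nat.cast_nonneg j
    linarith
  rw [Real.Gamma_eq_integral hs]
  apply setIntegral_congr_fun measurableSet_Ioi
  intro x hx
  have hx' : (0 : ℝ) < x := hx
  dsimp only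
  rw [show α + (j : ℝ) + 1 - 1 = (j : ℝ) + α by ring, Real.rpow_add hx', Real.rpow_natCast]
  ring

lemma sum_fun_eq (N : ℕ) (c : ℕ → ℝ) (l : ℕ) :
    (fun x : ℝ => (∑ k ∈ Finset.range N, c k * x ^ k) * x ^ l * x ^ α * Real.exp (-x))
      = fun x : ℝ => ∑ k ∈ Finset.range N, c k * (x ^ (k + l) * x ^ α * Real.exp (-x)) := by
  funext x
  rw [Finset.sum_mul, Finset.sum_mul, Finset.sum_mul]
  apply Finset.sum_congr rfl
  intro k _
  rw [pow_add]
  ring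

lemma sum_integrable (hα : -1 < α) (N : ℕ) (c : ℕ → ℝ) (l : ℕ) :
    IntegrableOn
      (fun x : ℝ => (∑ k ∈ Finset.range N, c k * x ^ k) * x ^ l * x ^ α * Real.exp (-x))
      (Set.Ioi 0) := by
  rw [sum_fun_eq]
  exact integrable_finset_sum _ fun k _ => (mono_integrable hα (k + l)).const_mul (c k)

lemma sum_integral (hα : -1 < α) (N : ℕ) (c : ℕ → ℝ) (l : ℕ) :
    ∫ x in Set.Ioi (0 : ℝ), (∑ k ∈ Finset.range N, c k * x ^ k) * x ^ l * x ^ α * Real.exp (-x)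
      = ∑ k ∈ Finset.range N, c k * Real.Gamma (α + (k + l) + 1) := by
  rw [show (∫ x in Set.Ioi (0 : ℝ),
      (∑ k ∈ Finset.range N, c k * x ^ k) * x ^ l * x ^ α * Real.exp (-x))
    = ∫ x in Set.Ioi (0 : ℝ),
      ∑ k ∈ Finset.range N, c k * (x ^ (k + l) * x ^ α * Real.exp (-x)) by
    exact congrArg _ (sum_fun_eq N c l)]
  rw [integral_finset_sum _ fun k _ => (mono_integrable hα (k + l)).const_mul (c k)]
  apply Finset.sum_congr rfl
  intro k _
  rw [MeasureTheory.integral_const_mul, mono_integral hα (k + l)]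
  push_cast
  ring_nf

lemma lagC_mul_Gamma (hα : -1 < α) (n k l : ℕ) (hk : k ≤ n) :
    lagC α n k * Real.Gamma (α + (k + l) + 1)
      = Real.Gamma (α + n + 1) / n.factorial
        * ((-1 : ℝ) ^ k * (n.choose k) * (ascPochhammer ℝ l).eval ((α + 1) + k)) := by
  have hx : (0 : ℝ) < α + k + 1 := by
    have : (0 : ℝ) ≤ k := Nat.cast_nonneg k
    linarith
  have hG1 : Real.Gamma (α + (k + l : ℕ) + 1)
      = Real.Gamma (α + k + 1) * (ascPochhammer ℝ l).eval (α + k + 1) := by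
    rw [Gamma_mul_poch hx l]
    push_cast
    ring_nf
  have hG2 : Real.Gamma (α + n + 1)
      = Real.Gamma (α + k + 1) * (ascPochhammer ℝ (n - k)).eval (α + k + 1) := by
    rw [Gamma_mul_poch hx (n - k)]
    rw [show ((n - k : ℕ) : ℝ) = (n : ℝ) - k by
      rw [Nat.cast_sub hk]]
    ring_nf
  have hfac : ((n.choose k : ℝ)) * k.factorial * (n - k).factorial = n.factorial := by
    exact_mod_cast Nat.choose_mul_factorial_mul_factorial hk
  have hne1 : (k.factorial : ℝ) ≠ 0 := Nat.cast_ne_zero.2 (Nat.factorial_ne_zero k)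
  have hne2 : ((n - k).factorial : ℝ) ≠ 0 := Nat.cast_ne_zero.2 (Nat.factorial_ne_zero _)
  have hne3 : ((n.factorial : ℝ)) ≠ 0 := Nat.cast_ne_zero.2 (Nat.factorial_ne_zero n)
  have hβ : (α + 1) + (k : ℝ) = α + k + 1 := by ring
  rw [lagC, hβ]
  push_cast at hG1
  rw [hG1, hG2]
  field_simp
  rw [← hfac]
  ring

lemma key_integral (hα : -1 < α) (n l : ℕ) :
    ∫ x in Set.Ioi (0 : ℝ), (laguerre α n).eval x * x ^ l * x ^ α * Real.exp (-x)
      = Real.Gamma (α + n + 1) / n.factorial * Tsum n l (α + 1) := by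
  have : (∫ x in Set.Ioi (0 : ℝ), (laguerre α n).eval x * x ^ l * x ^ α * Real.exp (-x))
      = ∫ x in Set.Ioi (0 : ℝ),
        (∑ k ∈ Finset.range (n + 1), lagC α n k * x ^ k) * x ^ l * x ^ α * Real.exp (-x) := by
    apply congrArg
    funext x
    rw [laguerre_eval]
  rw [this, sum_integral hα (n + 1) (lagC α n) l]
  unfold Tsum
  rw [Finset.mul_sum]
  apply Finset.sum_congr rfl
  intro k hk
  exact lagC_mul_Gamma hα n k l (Nat.lt_succ_iff.mp (Finset.mem_range.mp hk))

lemma lag_integrable (hα : -1 < α) (n l : ℕ) :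
    IntegrableOn (fun x : ℝ => (laguerre α n).eval x * x ^ l * x ^ α * Real.exp (-x))
      (Set.Ioi 0) := by
  have : (fun x : ℝ => (laguerre α n).eval x * x ^ l * x ^ α * Real.exp (-x))
      = fun x : ℝ =>
        (∑ k ∈ Finset.range (n + 1), lagC α n k * x ^ k) * x ^ l * x ^ α * Real.exp (-x) := by
    funext x; rw [laguerre_eval]
  rw [this]
  exact sum_integrable hα (n + 1) (lagC α n) l

lemma prod_integral (hα : -1 < α) (n m : ℕ) :
    ∫ x in Set.Ioi (0 : ℝ),
        (laguerre α n).eval x * (laguerre α m).eval x * x ^ α * Real.exp (-x)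
      = ∑ l ∈ Finset.range (m + 1),
          lagC α m l * (Real.Gamma (α + n + 1) / n.factorial * Tsum n l (α + 1)) := by
  have hfe : (fun x : ℝ =>
      (laguerre α n).eval x * (laguerre α m).eval x * x ^ α * Real.exp (-x))
      = fun x : ℝ => ∑ l ∈ Finset.range (m + 1),
          lagC α m l * ((laguerre α n).eval x * x ^ l * x ^ α * Real.exp (-x)) := by
    funext x
    rw [laguerre_eval α m x, Finset.mul_sum]
    rw [Finset.sum_mul, Finset.sum_mul]
    apply Finset.sum_congr rfl
    intro l _
    ring
  rw [show (∫ x in Set.Ioi (0 : ℝ),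
      (laguerre α n).eval x * (laguerre α m).eval x * x ^ α * Real.exp (-x))
    = ∫ x in Set.Ioi (0 : ℝ), ∑ l ∈ Finset.range (m + 1),
        lagC α m l * ((laguerre α n).eval x * x ^ l * x ^ α * Real.exp (-x)) from
      congrArg _ hfe]
  rw [integral_finset_sum _ fun l _ => (lag_integrable hα n l).const_mul (lagC α m l)]
  apply Finset.sum_congr rfl
  intro l _
  rw [MeasureTheory.integral_const_mul, key_integral hα n l]

lemma orth_lt (hα : -1 < α) {m n : ℕ} (h : m < n) :
    ∫ x in Set.Ioi (0 : ℝ),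
        (laguerre α n).eval x * (laguerre α m).eval x * x ^ α * Real.exp (-x) = 0 := by
  rw [prod_integral hα n m]
  apply Finset.sum_eq_zero
  intro l hl
  rw [Tsum_lt l n (α + 1) (by have := Finset.mem_range.mp hl; omega)]
  ring

lemma norm_eq (hα : -1 < α) (n : ℕ) :
    ∫ x in Set.Ioi (0 : ℝ),
        (laguerre α n).eval x * (laguerre α n).eval x * x ^ α * Real.exp (-x)
      = Real.Gamma (α + n + 1) / n.factorial := by
  rw [prod_integral hα n n, Finset.sum_range_succ]
  have h0 : ∑ l ∈ Finset.range n,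
      lagC α n l * (Real.Gamma (α + n + 1) / n.factorial * Tsum n l (α + 1)) = 0 := by
    apply Finset.sum_eq_zero
    intro l hl
    rw [Tsum_lt l n (α + 1) (Finset.mem_range.mp hl)]
    ring
  rw [h0, zero_add, Tsum_diag n (α + 1)]
  have hc : lagC α n n = (-1 : ℝ) ^ n / n.factorial := by
    rw [lagC, Nat.sub_self]
    simp [ascPochhammer_zero]
  rw [hc]
  have hne : ((n.factorial : ℝ)) ≠ 0 := Nat.cast_ne_zero.2 (Nat.factorial_ne_zero n)
  have hsq : ((-1 : ℝ)) ^ n * (-1 : ℝ) ^ n = 1 := by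
    rw [← pow_add, ← two_mul, pow_mul]; norm_num
  field_simp
  linear_combination Real.Gamma (α + n + 1) * hsq

end Analysis

/-- Orthogonality of the Laguerre polynomials with respect to the weight
`x^α e^{−x}` on `(0,∞)`, with squared norm `Γ(α+n+1)/n!` (which is nonzero). -/
theorem laguerre_orthogonality (α : ℝ) (hα : -1 < α) (m n : ℕ) :
    (m ≠ n →
      ∫ x in Set.Ioi (0 : ℝ),
        (laguerre α n).eval x * (laguerre α m).eval x * x ^ α * Real.exp (-x) = 0)
    ∧ (∫ x in Set.Ioi (0 : ℝ),
        ((laguerre α n).eval x) ^ 2 * x ^ α * Real.exp (-x))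
        = Real.Gamma (α + n + 1) / n.factorial
    ∧ Real.Gamma (α + n + 1) / n.factorial ≠ 0 := by
  refine ⟨?_, ?_, ?_⟩
  · intro hmn
    rcases lt_or_gt_of_ne hmn with h | h
    · exact orth_lt hα h
    · have hfe : (fun x : ℝ =>
          (laguerre α n).eval x * (laguerre α m).eval x * x ^ α * Real.exp (-x))
          = fun x : ℝ =>
          (laguerre α m).eval x * (laguerre α n).eval x * x ^ α * Real.exp (-x) := by
        funext x; ring
      calc (∫ x in Set.Ioi (0 : ℝ),
          (laguerre α n).eval x * (laguerre α m).eval x * x ^ α * Real.exp (-x))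
          = ∫ x in Set.Ioi (0 : ℝ),
            (laguerre α m).eval x * (laguerre α n).eval x * x ^ α * Real.exp (-x) :=
            congrArg _ hfe
        _ = 0 := orth_lt hα h
  · have hfe : (fun x : ℝ => ((laguerre α n).eval x) ^ 2 * x ^ α * Real.exp (-x))
        = fun x : ℝ =>
          (laguerre α n).eval x * (laguerre α n).eval x * x ^ α * Real.exp (-x) := by
      funext x; ring
    calc (∫ x in Set.Ioi (0 : ℝ), ((laguerre α n).eval x) ^ 2 * x ^ α * Real.exp (-x))
        = ∫ x in Set.Ioi (0 : ℝ),
          (laguerre α n).eval x * (laguerre α n).eval x * x ^ α * Real.exp (-x) :=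
          congrArg _ hfe
      _ = Real.Gamma (α + n + 1) / n.factorial := norm_eq hα n
  · have hpos : 0 < Real.Gamma (α + n + 1) := by
      apply Real.Gamma_pos_of_pos
      have : (0 : ℝ) ≤ n := Nat.cast_nonneg n
      linarith
    have hne : ((n.factorial : ℝ)) ≠ 0 := Nat.cast_ne_zero.2 (Nat.factorial_ne_zero n)
    positivity
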